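/- Every diagonal matrix of Mat_{2n}(k) (k a field of characteristic 0 with more than 2n+1 elements) lies in the subalgebra A_∘ of Mat_{2n}(k) generated by all unital subalgebras isomorphic to Mat_2(k); consequently, since A_∘ is invariant under conjugation by GL_{2n}(k), A_∘ = Mat_{2n}(k). -/

import Mathlib

open Matrix Kronecker

section Aux

variable {k : Type*} [Field k] {n : ℕ}

/-- The Kronecker embedding `Mat₂ → Mat₂ ⊗ I_n` as an algebra hom. -/
private noncomputable def krAlg (k : Type*) [Field k] (n : ℕ) :
    Matrix (Fin 2) (Fin 2) k →ₐ[k] Matrix (Fin 2 × Fin n) (Fin 2 × Fin n) k where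
  toFun x := x ⊗ₖ (1 : Matrix (Fin n) (Fin n) k)
  map_one' := Matrix.one_kronecker_one
  map_mul' x y := by
    rw [← Matrix.mul_kronecker_mul, one_mul]
  map_zero' := Matrix.zero_kronecker _
  map_add' x y := Matrix.add_kronecker x y 1
  commutes' r := by
    show (algebraMap k (Matrix (Fin 2) (Fin 2) k) r) ⊗ₖ (1 : Matrix (Fin n) (Fin n) k) = _
    rw [Algebra.algebraMap_eq_smul_one, Algebra.algebraMap_eq_smul_one,
      Matrix.smul_kronecker, Matrix.one_kronecker_one]

/-- The embedding `Mat₂ → Mat_{2n}` determined by an identification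
`Fin 2 × Fin n ≃ Fin (2*n)`. -/
private noncomputable def Phi (k : Type*) [Field k] {n : ℕ}
    (e : Fin 2 × Fin n ≃ Fin (2 * n)) :
    Matrix (Fin 2) (Fin 2) k →ₐ[k] Matrix (Fin (2 * n)) (Fin (2 * n)) k :=
  (Matrix.reindexAlgEquiv k k e).toAlgHom.comp (krAlg k n)

private lemma Phi_apply (e : Fin 2 × Fin n ≃ Fin (2 * n)) (x : Matrix (Fin 2) (Fin 2) k)
    (a b : Fin (2 * n)) :
    Phi k e x a b
      = x (e.symm a).1 (e.symm b).1 * (1 : Matrix (Fin n) (Fin n) k) (e.symm a).2 (e.symm b).2 :=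
  rfl

private lemma Phi_injective (hn : 1 ≤ n) (e : Fin 2 × Fin n ≃ Fin (2 * n)) :
    Function.Injective (Phi k e) := by
  intro x y h
  ext i j
  have := congrArg (fun M => M (e (i, ⟨0, hn⟩)) (e (j, ⟨0, hn⟩))) h
  simpa [Phi_apply, Matrix.one_apply] using this

/-- `A₀` as in the statement. -/
private noncomputable abbrev A0 (k : Type*) [Field k] (n : ℕ) :
    Subalgebra k (Matrix (Fin (2 * n)) (Fin (2 * n)) k) :=
  ⨆ (S : Subalgebra k (Matrix (Fin (2 * n)) (Fin (2 * n)) k))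
    (_ : Nonempty (S ≃ₐ[k] Matrix (Fin 2) (Fin 2) k)), S

private lemma Phi_mem (hn : 1 ≤ n) (e : Fin 2 × Fin n ≃ Fin (2 * n))
    (x : Matrix (Fin 2) (Fin 2) k) : Phi k e x ∈ A0 k n := by
  have hinj := Phi_injective (k := k) hn e
  have hle : (Phi k e).range ≤ A0 k n :=
    le_iSup_of_le (Phi k e).range
      (le_iSup (fun _ : Nonempty ((Phi k e).range ≃ₐ[k] Matrix (Fin 2) (Fin 2) k) =>
        (Phi k e).range) ⟨(AlgEquiv.ofInjective (Phi k e) hinj).symm⟩)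
  exact hle ⟨x, rfl⟩

private lemma Phi_E00 (e : Fin 2 × Fin n ≃ Fin (2 * n)) :
    Phi k e (Matrix.single 0 0 1)
      = Matrix.diagonal (fun a => if (e.symm a).1 = 0 then (1 : k) else 0) := by
  ext a b
  rw [Phi_apply]
  rcases eq_or_ne a b with rfl | hab
  · simp [Matrix.single, Matrix.one_apply, eq_comm]
  · have hne : e.symm a ≠ e.symm b := fun h => hab (e.symm.injective h)
    rcases eq_or_ne (e.symm a).2 (e.symm b).2 with h2 | h2
    · have h1 : ¬((0 : Fin 2) = (e.symm a).1 ∧ (0 : Fin 2) = (e.symm b).1) := by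
        rintro ⟨u, v⟩
        exact hne (Prod.ext (u.symm.trans v) h2)
      simp [Matrix.single, Matrix.diagonal, hab, h1]
    · simp [Matrix.one_apply, h2, Matrix.diagonal, hab]

private lemma flipE_symm_apply' : True := trivial

/-- The "flip" on all blocks except block 0. -/
private def flipE (n : ℕ) [NeZero n] : Fin 2 × Fin n ≃ Fin 2 × Fin n where
  toFun x := if x.2 = 0 then x else (Equiv.swap 0 1 x.1, x.2)
  invFun x := if x.2 = 0 then x else (Equiv.swap 0 1 x.1, x.2)
  left_inv x := by
    by_cases h : x.2 = 0 <;> simp [h, Equiv.swap_apply_self]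
  right_inv x := by
    by_cases h : x.2 = 0 <;> simp [h, Equiv.swap_apply_self]

private lemma flipE_symm_apply [NeZero n] (x : Fin 2 × Fin n) :
    (flipE n).symm x = if x.2 = 0 then x else (Equiv.swap 0 1 x.1, x.2) := rfl

private lemma Eaa_mem (hn : 1 ≤ n) (a : Fin (2 * n)) :
    Matrix.single a a (1 : k) ∈ A0 k n := by
  haveI : NeZero n := ⟨by omega⟩
  obtain ⟨e, hea⟩ : ∃ e : Fin 2 × Fin n ≃ Fin (2 * n), e (0, 0) = a :=
    ⟨finProdFinEquiv.trans (Equiv.swap (finProdFinEquiv ((0 : Fin 2), (0 : Fin n))) a), by simp⟩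
  have key : Phi k e (Matrix.single 0 0 1)
      * Phi k ((flipE n).trans e) (Matrix.single 0 0 1)
      = Matrix.single a a (1 : k) := by
    rw [Phi_E00, Phi_E00, Matrix.diagonal_mul_diagonal]
    ext i j
    rcases eq_or_ne i j with rfl | hij
    · rw [Matrix.diagonal_apply_eq, Equiv.symm_trans_apply, flipE_symm_apply]
      have hia : i = a ↔ e.symm i = (0, 0) := by
        rw [← hea]; exact (Equiv.symm_apply_eq e).symm
      by_cases h2 : (e.symm i).2 = 0
      · rw [if_pos h2]
        by_cases h1 : (e.symm i).1 = 0
        · have hi : i = a := hia.mpr (Prod.ext h1 h2)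
          simp [← hi, h1, Matrix.single]
        · have hi : i ≠ a := fun h => h1 (congrArg Prod.fst (hia.mp h))
          simp [h1, Matrix.single, Ne.symm hi]
      · rw [if_neg h2]
        have hi : i ≠ a := fun h => h2 (congrArg Prod.snd (hia.mp h))
        by_cases h1 : (e.symm i).1 = 0
        · have hswap : Equiv.swap (0 : Fin 2) 1 (e.symm i).1 ≠ 0 := by
            rw [h1, Equiv.swap_apply_left]; decide
          simp [hswap, Matrix.single, Ne.symm hi]
        · simp [h1, Matrix.single, Ne.symm hi]
    · rw [Matrix.diagonal_apply_ne _ hij]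
      rw [eq_comm, Matrix.single, Matrix.of_apply, if_neg]
      rintro ⟨rfl, rfl⟩
      exact hij rfl
  rw [← key]
  exact mul_mem (Phi_mem hn _ _) (Phi_mem hn _ _)

private lemma sandwich {I : Type*} [Fintype I] [DecidableEq I] (a b : I)
    (M : Matrix I I k) :
    Matrix.single a a 1 * M * Matrix.single b b 1
      = Matrix.single a b (M a b) := by
  ext i j
  by_cases hi : i = a
  · subst hi
    by_cases hj : j = b
    · subst hj
      rw [Matrix.mul_single_apply_same, Matrix.single_mul_apply_same,
        one_mul, mul_one]
      simp [Matrix.single]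
    · rw [Matrix.mul_single_apply_of_ne _ _ _ _ _ hj]
      have hbj : b ≠ j := fun h => hj h.symm
      simp [Matrix.single, hbj]
  · rw [Matrix.mul_assoc, Matrix.single_mul_apply_of_ne _ _ _ _ _ hi]
    have hai : a ≠ i := fun h => hi h.symm
    simp [Matrix.single, hai]

private lemma Eab_mem (hn : 1 ≤ n) (a b : Fin (2 * n)) (hab : a ≠ b) :
    Matrix.single a b (1 : k) ∈ A0 k n := by
  haveI : NeZero n := ⟨by omega⟩
  obtain ⟨e, hea, heb⟩ : ∃ e : Fin 2 × Fin n ≃ Fin (2 * n),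
      e (0, 0) = a ∧ e (1, 0) = b := by
    set e0 : Fin 2 × Fin n ≃ Fin (2 * n) := finProdFinEquiv with he0
    set a0 := e0 ((0 : Fin 2), (0 : Fin n)) with ha0
    set b0 := e0 ((1 : Fin 2), (0 : Fin n)) with hb0
    have hab0 : a0 ≠ b0 := by
      rw [ha0, hb0]
      intro h
      have := e0.injective h
      simp [Prod.ext_iff] at this
    set c := Equiv.swap a0 a b0 with hc
    have hca : c ≠ a := by
      intro h
      have h2 : Equiv.swap a0 a c = Equiv.swap a0 a a := by rw [h]
      rw [hc, Equiv.swap_apply_self, Equiv.swap_apply_right] at h2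
      exact hab0 h2.symm
    set σ : Fin (2 * n) ≃ Fin (2 * n) := (Equiv.swap a0 a).trans (Equiv.swap c b) with hσ
    have hσa : σ a0 = a := by
      rw [hσ]
      simp only [Equiv.trans_apply]
      have : Equiv.swap a0 a a0 = a := Equiv.swap_apply_left _ _
      rw [this, Equiv.swap_apply_of_ne_of_ne hca.symm hab]
    have hσb : σ b0 = b := by
      rw [hσ]
      simp only [Equiv.trans_apply]
      rw [← hc, Equiv.swap_apply_left]
    exact ⟨e0.trans σ, hσa, hσb⟩
  have hM : Phi k e (Matrix.single 0 1 1) a b = 1 := by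
    rw [Phi_apply]
    have h1 : e.symm a = ((0 : Fin 2), (0 : Fin n)) := by
      rw [← hea, e.symm_apply_apply]
    have h2 : e.symm b = ((1 : Fin 2), (0 : Fin n)) := by
      rw [← heb, e.symm_apply_apply]
    rw [h1, h2]
    simp [Matrix.single, Matrix.one_apply]
  have key : Matrix.single a a (1 : k) * Phi k e (Matrix.single 0 1 1)
      * Matrix.single b b 1 = Matrix.single a b (1 : k) := by
    rw [sandwich, hM]
  rw [← key]
  exact mul_mem (mul_mem (Eaa_mem hn a) (Phi_mem hn _ _)) (Eaa_mem hn b)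

private lemma A0_eq_top (hn : 1 ≤ n) : A0 k n = ⊤ := by
  rw [eq_top_iff]
  intro m _
  rw [Matrix.matrix_eq_sum_single m]
  refine Subalgebra.sum_mem _ fun i _ => Subalgebra.sum_mem _ fun j _ => ?_
  have : Matrix.single i j (m i j) = m i j • Matrix.single i j (1 : k) := by
    rw [Matrix.smul_single, smul_eq_mul, mul_one]
  rw [this]
  refine Subalgebra.smul_mem _ ?_ _
  rcases eq_or_ne i j with rfl | hij
  · exact Eaa_mem hn i
  · exact Eab_mem hn i j hij

end Aux

/-- let `k` be a field of characteristic 0 (with more than `2n+1` elements) and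
let `A_∘` be the subalgebra of `Mat_{2n}(k)` generated by all unital subalgebras isomorphic to
`Mat_2(k)`.  Then every diagonal matrix of `Mat_{2n}(k)` lies in `A_∘`, and consequently (since
`A_∘` is invariant under conjugation by `GL_{2n}(k)`) `A_∘ = Mat_{2n}(k)`. -/
theorem mat2_subalgebras_generate (k : Type*) [Field k] [CharZero k] (n : ℕ) (hn : 1 ≤ n)
    (hcard : (2 * n + 1 : Cardinal) < Cardinal.mk k) :
    letI M := Matrix (Fin (2 * n)) (Fin (2 * n)) k
    letI A₀ : Subalgebra k M :=
      ⨆ (S : Subalgebra k M) (_ : Nonempty (S ≃ₐ[k] Matrix (Fin 2) (Fin 2) k)), S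
    (∀ d : Fin (2 * n) → k, Matrix.diagonal d ∈ A₀) ∧ A₀ = ⊤ := by
  have htop : (⨆ (S : Subalgebra k (Matrix (Fin (2 * n)) (Fin (2 * n)) k))
      (_ : Nonempty (S ≃ₐ[k] Matrix (Fin 2) (Fin 2) k)), S) = ⊤ := A0_eq_top hn
  refine ⟨fun d => ?_, htop⟩
  rw [htop]
  exact trivial
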